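/- Let p be a prime and F = ZMod p. Define T(f₁,f₂,f₃,f₄) := (1/p²) ∑_{x,y ∈ F} f₁(x) f₂(y) f₃(x+y) f₄(xy). Suppose g₁, g₂, g₄ : F → ℂ satisfy ‖gᵢ‖_∞ ≤ K for some K ≥ 1 and ‖gᵢ‖₂ ≤ 1 (L² with respect to uniform probability measure on F), for i ∈ {1,2,4}. Then |T(g₁,g₂,1,g₄)| ≤ ‖g₄‖_{u₂^×} + 4K³/p, where ‖g‖_{u₂^×} := sup over multiplicative characters χ of F* (extended to F by χ(0) := 1) of |(1/p) ∑_{x∈F} g(x) conj(χ(x))|. -/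

import Mathlib

open Finset Complex

noncomputable instance mcFintype (p : ℕ) [Fact p.Prime] : Fintype (MulChar (ZMod p) ℂ) :=
  DirichletCharacter.fintype

lemma mulChar_norm_one {p : ℕ} [Fact p.Prime] (χ : MulChar (ZMod p) ℂ) {x : ZMod p} (hx : x ≠ 0) :
    ‖χ x‖ = 1 := by
  have hx1 : x ^ (p - 1) = 1 := ZMod.pow_card_sub_one_eq_one hx
  have h : (χ x) ^ (p - 1) = 1 := by rw [← map_pow, hx1, map_one]
  exact Complex.norm_eq_one_of_pow_eq_one h
    (Nat.sub_ne_zero_of_lt (Fact.out (p := p.Prime)).one_lt)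

lemma mulChar_conj {p : ℕ} [Fact p.Prime] (χ : MulChar (ZMod p) ℂ) {x : ZMod p} (hx : x ≠ 0) :
    (starRingEnd ℂ) (χ x) = χ x⁻¹ := by
  have h1 : χ x * χ x⁻¹ = 1 := by rw [← map_mul, mul_inv_cancel₀ hx, map_one]
  have h2 : (starRingEnd ℂ) (χ x) = (χ x)⁻¹ :=
    (Complex.inv_eq_conj (by exact mulChar_norm_one χ hx)).symm
  rw [h2, eq_comm, inv_eq_of_mul_eq_one_right h1]

lemma char_orth {p : ℕ} [Fact p.Prime] {u : ZMod p} (hu : u ≠ 0) (v : ZMod p) :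
    ∑ χ : MulChar (ZMod p) ℂ, χ u * (starRingEnd ℂ) (χ v)
      = if u = v then ((p - 1 : ℕ) : ℂ) else 0 := by
  by_cases hv : v = 0
  · subst hv
    have h0 : ∀ χ : MulChar (ZMod p) ℂ, χ (0 : ZMod p) = 0 := fun χ =>
      χ.map_nonunit (by simp)
    simp [h0, hu]
  · have h : ∀ χ : MulChar (ZMod p) ℂ, χ u * (starRingEnd ℂ) (χ v) = χ v⁻¹ * χ u := by
      intro χ; rw [mulChar_conj χ hv, mul_comm]
    rw [Finset.sum_congr rfl fun χ _ => h χ,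
      DirichletCharacter.sum_char_inv_mul_char_eq ℂ (isUnit_iff_ne_zero.mpr hv) u,
      Nat.totient_prime (Fact.out (p := p.Prime))]
    simp [eq_comm]

lemma parseval {p : ℕ} [Fact p.Prime] (g : ZMod p → ℂ) :
    ∑ χ : MulChar (ZMod p) ℂ, ‖∑ x ∈ Finset.univ.erase (0 : ZMod p), g x * χ x‖ ^ 2
      = ((p - 1 : ℕ) : ℝ) * ∑ x ∈ Finset.univ.erase (0 : ZMod p), ‖g x‖ ^ 2 := by
  have key : ∑ χ : MulChar (ZMod p) ℂ,
        ((‖∑ x ∈ Finset.univ.erase (0 : ZMod p), g x * χ x‖ : ℂ)) ^ 2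
      = ((p - 1 : ℕ) : ℂ) * ∑ x ∈ Finset.univ.erase (0 : ZMod p), ((‖g x‖ : ℂ)) ^ 2 := by
    have h1 : ∀ χ : MulChar (ZMod p) ℂ,
        ((‖∑ x ∈ Finset.univ.erase (0 : ZMod p), g x * χ x‖ : ℂ)) ^ 2
        = ∑ x ∈ Finset.univ.erase (0 : ZMod p), ∑ y ∈ Finset.univ.erase (0 : ZMod p),
            (g x * (starRingEnd ℂ) (g y)) * (χ x * (starRingEnd ℂ) (χ y)) := by
      intro χ
      rw [← Complex.mul_conj', map_sum, Finset.sum_mul_sum]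
      exact Finset.sum_congr rfl fun x _ => Finset.sum_congr rfl fun y _ => by
        rw [map_mul]; ring
    rw [Finset.sum_congr rfl fun χ _ => h1 χ, Finset.sum_comm]
    have h2 : ∀ x ∈ Finset.univ.erase (0 : ZMod p),
        (∑ χ : MulChar (ZMod p) ℂ, ∑ y ∈ Finset.univ.erase (0 : ZMod p),
            (g x * (starRingEnd ℂ) (g y)) * (χ x * (starRingEnd ℂ) (χ y)))
        = ((p - 1 : ℕ) : ℂ) * ((‖g x‖ : ℂ)) ^ 2 := by
      intro x hx
      have hx0 : x ≠ 0 := (Finset.mem_erase.mp hx).1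
      rw [Finset.sum_comm]
      have h3 : ∀ y ∈ Finset.univ.erase (0 : ZMod p),
          (∑ χ : MulChar (ZMod p) ℂ,
              (g x * (starRingEnd ℂ) (g y)) * (χ x * (starRingEnd ℂ) (χ y)))
          = (g x * (starRingEnd ℂ) (g y)) * (if x = y then ((p - 1 : ℕ) : ℂ) else 0) := by
        intro y _
        rw [← Finset.mul_sum, char_orth hx0 y]
      rw [Finset.sum_congr rfl h3, Finset.sum_eq_single x
        (fun y _ hy => by rw [if_neg (fun h => hy h.symm), mul_zero])
        (fun h => absurd hx h)]
      rw [if_pos rfl, Complex.mul_conj']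
      ring
    rw [Finset.sum_congr rfl h2, ← Finset.mul_sum]
  exact_mod_cast key

lemma inversion {p : ℕ} [Fact p.Prime] (g₁ g₂ g₄ : ZMod p → ℂ) :
    ∑ χ : MulChar (ZMod p) ℂ,
        (∑ w ∈ Finset.univ.erase (0 : ZMod p), g₄ w * (starRingEnd ℂ) (χ w))
          * ((∑ x ∈ Finset.univ.erase (0 : ZMod p), g₁ x * χ x)
            * (∑ y ∈ Finset.univ.erase (0 : ZMod p), g₂ y * χ y))
      = ((p - 1 : ℕ) : ℂ) * ∑ x ∈ Finset.univ.erase (0 : ZMod p),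
          ∑ y ∈ Finset.univ.erase (0 : ZMod p), g₁ x * g₂ y * g₄ (x * y) := by
  have expand : ∀ χ : MulChar (ZMod p) ℂ,
      (∑ w ∈ Finset.univ.erase (0 : ZMod p), g₄ w * (starRingEnd ℂ) (χ w))
        * ((∑ x ∈ Finset.univ.erase (0 : ZMod p), g₁ x * χ x)
          * (∑ y ∈ Finset.univ.erase (0 : ZMod p), g₂ y * χ y))
      = ∑ x ∈ Finset.univ.erase (0 : ZMod p), ∑ y ∈ Finset.univ.erase (0 : ZMod p),
          ∑ w ∈ Finset.univ.erase (0 : ZMod p),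
            (g₁ x * g₂ y * g₄ w) * (χ (x * y) * (starRingEnd ℂ) (χ w)) := by
    intro χ
    rw [mul_comm, Finset.sum_mul_sum, Finset.sum_mul]
    refine Finset.sum_congr rfl fun x _ => ?_
    rw [Finset.sum_mul]
    refine Finset.sum_congr rfl fun y _ => ?_
    rw [Finset.mul_sum]
    refine Finset.sum_congr rfl fun w _ => ?_
    rw [map_mul]; ring
  rw [Finset.sum_congr rfl fun χ _ => expand χ, Finset.sum_comm]
  have h2 : ∀ x ∈ Finset.univ.erase (0 : ZMod p),
      (∑ χ : MulChar (ZMod p) ℂ, ∑ y ∈ Finset.univ.erase (0 : ZMod p),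
          ∑ w ∈ Finset.univ.erase (0 : ZMod p),
            (g₁ x * g₂ y * g₄ w) * (χ (x * y) * (starRingEnd ℂ) (χ w)))
      = ∑ y ∈ Finset.univ.erase (0 : ZMod p),
          ((p - 1 : ℕ) : ℂ) * (g₁ x * g₂ y * g₄ (x * y)) := by
    intro x hx
    have hx0 : x ≠ 0 := (Finset.mem_erase.mp hx).1
    rw [Finset.sum_comm]
    refine Finset.sum_congr rfl fun y hy => ?_
    have hy0 : y ≠ 0 := (Finset.mem_erase.mp hy).1
    rw [Finset.sum_comm]
    have h3 : ∀ w ∈ Finset.univ.erase (0 : ZMod p),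
        (∑ χ : MulChar (ZMod p) ℂ,
            (g₁ x * g₂ y * g₄ w) * (χ (x * y) * (starRingEnd ℂ) (χ w)))
        = (g₁ x * g₂ y * g₄ w) * (if x * y = w then ((p - 1 : ℕ) : ℂ) else 0) := by
      intro w _
      rw [← Finset.mul_sum, char_orth (mul_ne_zero hx0 hy0) w]
    rw [Finset.sum_congr rfl h3, Finset.sum_eq_single (x * y)
      (fun w _ hw => by rw [if_neg (fun h => hw h.symm), mul_zero])
      (fun h => absurd (Finset.mem_erase.mpr ⟨mul_ne_zero hx0 hy0, Finset.mem_univ _⟩) h)]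
    rw [if_pos rfl]; ring
  rw [Finset.sum_congr rfl h2, Finset.mul_sum]
  exact Finset.sum_congr rfl fun x _ => by rw [← Finset.mul_sum]

set_option maxHeartbeats 1000000 in
theorem stmt1 (p : ℕ) [Fact p.Prime] (K : ℝ) (hK : 1 ≤ K) (g₁ g₂ g₄ : ZMod p → ℂ)
    (hb₁ : ∀ x, ‖g₁ x‖ ≤ K) (hb₂ : ∀ x, ‖g₂ x‖ ≤ K) (hb₄ : ∀ x, ‖g₄ x‖ ≤ K)
    (h₁₂ : (1 / (p : ℝ)) * ∑ x : ZMod p, ‖g₁ x‖ ^ 2 ≤ 1)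
    (h₂₂ : (1 / (p : ℝ)) * ∑ x : ZMod p, ‖g₂ x‖ ^ 2 ≤ 1)
    (h₄₂ : (1 / (p : ℝ)) * ∑ x : ZMod p, ‖g₄ x‖ ^ 2 ≤ 1) :
    ∃ χ : MulChar (ZMod p) ℂ,
      ‖(1 / (p : ℂ) ^ 2) * ∑ x : ZMod p, ∑ y : ZMod p, g₁ x * g₂ y * 1 * g₄ (x * y)‖ ≤
        ‖(1 / (p : ℂ)) * ∑ x : ZMod p,
            g₄ x * starRingEnd ℂ (if x = 0 then 1 else χ x)‖ + 4 * K ^ 3 / p := by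
  have hp : p.Prime := Fact.out
  have hq : (0 : ℝ) < p := by exact_mod_cast hp.pos
  have hq2 : (2 : ℝ) ≤ p := by exact_mod_cast hp.two_le
  have hpm1 : ((p - 1 : ℕ) : ℝ) = (p : ℝ) - 1 := by
    push_cast [Nat.cast_sub hp.one_lt.le]; ring
  have hpm1pos : (0 : ℝ) < ((p - 1 : ℕ) : ℝ) := by rw [hpm1]; linarith
  set s : Finset (ZMod p) := Finset.univ.erase 0 with hsdef
  -- L² consequences
  have l2 : ∀ g : ZMod p → ℂ, (1 / (p : ℝ)) * ∑ x : ZMod p, ‖g x‖ ^ 2 ≤ 1 →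
      ∑ x : ZMod p, ‖g x‖ ^ 2 ≤ p := by
    intro g h
    have h' := mul_le_mul_of_nonneg_left h hq.le
    rwa [mul_one, ← mul_assoc, mul_one_div_cancel hq.ne', one_mul] at h'
  have l1 : ∀ g : ZMod p → ℂ, (∑ x : ZMod p, ‖g x‖ ^ 2) ≤ (p : ℝ) →
      ∑ x : ZMod p, ‖g x‖ ≤ p := by
    intro g h
    have hcs := Finset.sum_mul_sq_le_sq_mul_sq Finset.univ (fun x => ‖g x‖) (fun _ => 1)
    simp only [mul_one, one_pow] at hcs
    rw [Finset.sum_const, Finset.card_univ, ZMod.card, nsmul_eq_mul, mul_one] at hcs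
    have hnn : (0 : ℝ) ≤ ∑ x : ZMod p, ‖g x‖ :=
      Finset.sum_nonneg fun x _ => norm_nonneg _
    nlinarith [hcs, h, hnn, hq]
  have hg1s := l1 g₁ (l2 g₁ h₁₂)
  have hg2s := l1 g₂ (l2 g₂ h₂₂)
  -- the character achieving the max of ‖c χ‖
  obtain ⟨χ, -, hχmax⟩ := Finset.exists_max_image Finset.univ
    (fun χ : MulChar (ZMod p) ℂ => ‖∑ w ∈ s, g₄ w * (starRingEnd ℂ) (χ w)‖)
    ⟨1, Finset.mem_univ 1⟩
  refine ⟨χ, ?_⟩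
  set c : MulChar (ZMod p) ℂ → ℂ := fun χ => ∑ w ∈ s, g₄ w * (starRingEnd ℂ) (χ w) with hcdef
  set A : MulChar (ZMod p) ℂ → ℂ := fun χ => ∑ x ∈ s, g₁ x * χ x with hAdef
  set B : MulChar (ZMod p) ℂ → ℂ := fun χ => ∑ y ∈ s, g₂ y * χ y with hBdef
  -- split off the x = 0 / y = 0 parts
  have hF : ∀ x : ZMod p, (∑ y : ZMod p, g₁ x * g₂ y * g₄ (x * y))
      = (∑ y ∈ s, g₁ x * g₂ y * g₄ (x * y)) + g₁ x * g₂ 0 * g₄ 0 := by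
    intro x
    rw [← Finset.sum_erase_add Finset.univ _ (Finset.mem_univ (0 : ZMod p)), mul_zero]
  have hsplit : ∑ x : ZMod p, ∑ y : ZMod p, g₁ x * g₂ y * g₄ (x * y)
      = (∑ x ∈ s, ∑ y ∈ s, g₁ x * g₂ y * g₄ (x * y))
        + ((∑ x ∈ s, g₁ x * g₂ 0 * g₄ 0) + ∑ y : ZMod p, g₁ 0 * g₂ y * g₄ 0) := by
    rw [← Finset.sum_erase_add Finset.univ _ (Finset.mem_univ (0 : ZMod p))]
    rw [Finset.sum_congr rfl fun x _ => hF x, Finset.sum_add_distrib, add_assoc]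
    congr 2
    exact Finset.sum_congr rfl fun y _ => by rw [zero_mul]
  -- error term bound
  have e1 : ‖∑ x ∈ s, g₁ x * g₂ 0 * g₄ 0‖ ≤ K ^ 2 * p := by
    calc ‖∑ x ∈ s, g₁ x * g₂ 0 * g₄ 0‖ ≤ ∑ x ∈ s, ‖g₁ x * g₂ 0 * g₄ 0‖ := norm_sum_le _ _
      _ ≤ ∑ x ∈ s, ‖g₁ x‖ * K * K := Finset.sum_le_sum fun x _ => by
          rw [norm_mul, norm_mul]
          gcongr
          exacts [hb₂ 0, hb₄ 0]
      _ = (∑ x ∈ s, ‖g₁ x‖) * K * K := by rw [← Finset.sum_mul, ← Finset.sum_mul]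
      _ ≤ K ^ 2 * p := by
          have hsub1 : (∑ x ∈ s, ‖g₁ x‖) ≤ ∑ x : ZMod p, ‖g₁ x‖ :=
            Finset.sum_le_sum_of_subset_of_nonneg (Finset.erase_subset _ _)
              fun x _ _ => norm_nonneg _
          have h := hsub1.trans hg1s
          have hsn : (0 : ℝ) ≤ ∑ x ∈ s, ‖g₁ x‖ :=
            Finset.sum_nonneg fun x _ => norm_nonneg _
          nlinarith [h, hK, hsn]
  have e2 : ‖∑ y : ZMod p, g₁ 0 * g₂ y * g₄ 0‖ ≤ K ^ 2 * p := by
    calc ‖∑ y : ZMod p, g₁ 0 * g₂ y * g₄ 0‖ ≤ ∑ y : ZMod p, ‖g₁ 0 * g₂ y * g₄ 0‖ :=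
          norm_sum_le _ _
      _ ≤ ∑ y : ZMod p, K * ‖g₂ y‖ * K := Finset.sum_le_sum fun y _ => by
          rw [norm_mul, norm_mul]
          gcongr
          exacts [hb₁ 0, hb₄ 0]
      _ = K * (∑ y : ZMod p, ‖g₂ y‖) * K := by rw [← Finset.sum_mul, ← Finset.mul_sum]
      _ ≤ K ^ 2 * p := by
          have hsn : (0 : ℝ) ≤ ∑ y : ZMod p, ‖g₂ y‖ :=
            Finset.sum_nonneg fun y _ => norm_nonneg _
          nlinarith [hg2s, hK, hsn]
  -- Parseval bounds
  have hP1 : ∑ χ' : MulChar (ZMod p) ℂ, ‖A χ'‖ ^ 2 ≤ ((p - 1 : ℕ) : ℝ) * p := by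
    rw [hAdef]
    rw [parseval g₁]
    gcongr
    calc ∑ x ∈ s, ‖g₁ x‖ ^ 2 ≤ ∑ x : ZMod p, ‖g₁ x‖ ^ 2 :=
          Finset.sum_le_sum_of_subset_of_nonneg (Finset.erase_subset _ _)
            fun x _ _ => sq_nonneg _
      _ ≤ p := l2 g₁ h₁₂
  have hP2 : ∑ χ' : MulChar (ZMod p) ℂ, ‖B χ'‖ ^ 2 ≤ ((p - 1 : ℕ) : ℝ) * p := by
    rw [hBdef, parseval g₂]
    gcongr
    calc ∑ x ∈ s, ‖g₂ x‖ ^ 2 ≤ ∑ x : ZMod p, ‖g₂ x‖ ^ 2 :=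
          Finset.sum_le_sum_of_subset_of_nonneg (Finset.erase_subset _ _)
            fun x _ _ => sq_nonneg _
      _ ≤ p := l2 g₂ h₂₂
  -- Cauchy–Schwarz over characters
  have hAB : ∑ χ' : MulChar (ZMod p) ℂ, ‖A χ'‖ * ‖B χ'‖ ≤ ((p - 1 : ℕ) : ℝ) * p := by
    have hcs := Finset.sum_mul_sq_le_sq_mul_sq Finset.univ
      (fun χ' : MulChar (ZMod p) ℂ => ‖A χ'‖) (fun χ' => ‖B χ'‖)
    have hnn : (0 : ℝ) ≤ ∑ χ' : MulChar (ZMod p) ℂ, ‖A χ'‖ * ‖B χ'‖ :=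
      Finset.sum_nonneg fun χ' _ => mul_nonneg (norm_nonneg _) (norm_nonneg _)
    have hPn : (0 : ℝ) ≤ ((p - 1 : ℕ) : ℝ) * p := by positivity
    nlinarith [hcs, hP1, hP2, hnn, hPn,
      Finset.sum_nonneg (fun χ' (_ : χ' ∈ (Finset.univ : Finset (MulChar (ZMod p) ℂ))) =>
        sq_nonneg ‖A χ'‖)]
  -- main term bound via inversion
  have hinv := inversion g₁ g₂ g₄
  have hmain : ((p - 1 : ℕ) : ℝ) * ‖∑ x ∈ s, ∑ y ∈ s, g₁ x * g₂ y * g₄ (x * y)‖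
      ≤ ‖c χ‖ * (((p - 1 : ℕ) : ℝ) * p) := by
    have h1 : ‖∑ χ' : MulChar (ZMod p) ℂ, c χ' * (A χ' * B χ')‖
        ≤ ‖c χ‖ * ∑ χ' : MulChar (ZMod p) ℂ, ‖A χ'‖ * ‖B χ'‖ := by
      calc ‖∑ χ' : MulChar (ZMod p) ℂ, c χ' * (A χ' * B χ')‖
          ≤ ∑ χ' : MulChar (ZMod p) ℂ, ‖c χ' * (A χ' * B χ')‖ := norm_sum_le _ _
        _ ≤ ∑ χ' : MulChar (ZMod p) ℂ, ‖c χ‖ * (‖A χ'‖ * ‖B χ'‖) :=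
            Finset.sum_le_sum fun χ' _ => by
              rw [norm_mul, norm_mul]
              exact mul_le_mul_of_nonneg_right (hχmax χ' (Finset.mem_univ _))
                (mul_nonneg (norm_nonneg _) (norm_nonneg _))
        _ = ‖c χ‖ * ∑ χ' : MulChar (ZMod p) ℂ, ‖A χ'‖ * ‖B χ'‖ := by
            rw [Finset.mul_sum]
    have h2 : ‖∑ χ' : MulChar (ZMod p) ℂ, c χ' * (A χ' * B χ')‖
        = ((p - 1 : ℕ) : ℝ) * ‖∑ x ∈ s, ∑ y ∈ s, g₁ x * g₂ y * g₄ (x * y)‖ := by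
      rw [hinv, norm_mul, Complex.norm_natCast]
    rw [← h2]
    calc ‖∑ χ' : MulChar (ZMod p) ℂ, c χ' * (A χ' * B χ')‖
        ≤ ‖c χ‖ * ∑ χ' : MulChar (ZMod p) ℂ, ‖A χ'‖ * ‖B χ'‖ := h1
      _ ≤ ‖c χ‖ * (((p - 1 : ℕ) : ℝ) * p) :=
          mul_le_mul_of_nonneg_left hAB (norm_nonneg _)
  have hS' : ‖∑ x ∈ s, ∑ y ∈ s, g₁ x * g₂ y * g₄ (x * y)‖ ≤ ‖c χ‖ * p := by
    have := hmain
    rw [show ‖c χ‖ * (((p - 1 : ℕ) : ℝ) * p) = ((p - 1 : ℕ) : ℝ) * (‖c χ‖ * p) by ring] at this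
    exact le_of_mul_le_mul_left this hpm1pos
  -- relate c χ to the dual norm expression
  have hD : ∑ x : ZMod p, g₄ x * (starRingEnd ℂ) (if x = 0 then 1 else χ x)
      = c χ + g₄ 0 := by
    rw [← Finset.sum_erase_add Finset.univ _ (Finset.mem_univ (0 : ZMod p))]
    congr 1
    · exact Finset.sum_congr rfl fun x hx => by
        rw [if_neg (Finset.mem_erase.mp hx).1]
    · simp
  have hcD : ‖c χ‖ ≤ ‖∑ x : ZMod p, g₄ x * (starRingEnd ℂ) (if x = 0 then 1 else χ x)‖ + K := by
    have : c χ = (∑ x : ZMod p, g₄ x * (starRingEnd ℂ) (if x = 0 then 1 else χ x)) - g₄ 0 := by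
      rw [hD]; ring
    rw [this]
    calc ‖_ - g₄ 0‖ ≤ ‖∑ x : ZMod p, g₄ x * (starRingEnd ℂ) (if x = 0 then 1 else χ x)‖ + ‖g₄ 0‖ :=
          norm_sub_le _ _
      _ ≤ _ + K := by gcongr; exact hb₄ 0
  -- final assembly
  set D : ℝ := ‖∑ x : ZMod p, g₄ x * (starRingEnd ℂ) (if x = 0 then 1 else χ x)‖ with hDdef
  have hDnn : 0 ≤ D := norm_nonneg _
  have hSfull : ‖∑ x : ZMod p, ∑ y : ZMod p, g₁ x * g₂ y * g₄ (x * y)‖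
      ≤ (D + K) * p + 2 * K ^ 2 * p := by
    rw [hsplit]
    calc ‖_‖ ≤ ‖∑ x ∈ s, ∑ y ∈ s, g₁ x * g₂ y * g₄ (x * y)‖
          + ‖(∑ x ∈ s, g₁ x * g₂ 0 * g₄ 0) + ∑ y : ZMod p, g₁ 0 * g₂ y * g₄ 0‖ :=
          norm_add_le _ _
      _ ≤ ‖c χ‖ * p + (K ^ 2 * p + K ^ 2 * p) :=
          add_le_add hS' ((norm_add_le _ _).trans (add_le_add e1 e2))
      _ ≤ (D + K) * p + 2 * K ^ 2 * p := by nlinarith [hcD, hq, hDnn]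
  have hnorm1 : ‖(1 / (p : ℂ) ^ 2)‖ = 1 / (p : ℝ) ^ 2 := by
    rw [norm_div, norm_one, norm_pow, Complex.norm_natCast]
  have hnorm2 : ‖(1 / (p : ℂ))‖ = 1 / (p : ℝ) := by
    rw [norm_div, norm_one, Complex.norm_natCast]
  have hgoal : ‖(1 / (p : ℂ) ^ 2) * ∑ x : ZMod p, ∑ y : ZMod p, g₁ x * g₂ y * g₄ (x * y)‖
      ≤ (1 / (p : ℝ)) * D + 4 * K ^ 3 / p := by
    rw [norm_mul, hnorm1]
    have step : (1 / (p : ℝ) ^ 2) * ‖∑ x : ZMod p, ∑ y : ZMod p, g₁ x * g₂ y * g₄ (x * y)‖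
        ≤ (1 / (p : ℝ) ^ 2) * ((D + K) * p + 2 * K ^ 2 * p) := by
      gcongr
    refine step.trans ?_
    have heq : (1 / (p : ℝ) ^ 2) * ((D + K) * p + 2 * K ^ 2 * p)
        = (D + K + 2 * K ^ 2) / p := by
      field_simp
    rw [heq]
    have hK3 : K + 2 * K ^ 2 ≤ 4 * K ^ 3 := by nlinarith [hK, sq_nonneg K, sq_nonneg (K - 1)]
    have hrw : (1 / (p : ℝ)) * D + 4 * K ^ 3 / p = (D + 4 * K ^ 3) / p := by
      rw [one_div, inv_mul_eq_div, ← add_div]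
    rw [hrw]
    exact (div_le_div_iff_of_pos_right hq).mpr (by linarith)
  calc ‖(1 / (p : ℂ) ^ 2) * ∑ x : ZMod p, ∑ y : ZMod p, g₁ x * g₂ y * 1 * g₄ (x * y)‖
      = ‖(1 / (p : ℂ) ^ 2) * ∑ x : ZMod p, ∑ y : ZMod p, g₁ x * g₂ y * g₄ (x * y)‖ := by
        simp only [mul_one]
    _ ≤ (1 / (p : ℝ)) * D + 4 * K ^ 3 / p := hgoal
    _ = ‖(1 / (p : ℂ)) * ∑ x : ZMod p, g₄ x * starRingEnd ℂ (if x = 0 then 1 else χ x)‖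
        + 4 * K ^ 3 / p := by
        rw [norm_mul, hnorm2]
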